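/- Let F_q be the finite field with q elements, l = l₁ + l₂, and let G_{O/I}, B₁^n, B₂^n be mutually independent and uniformly distributed on F_q^{l×n}, F_q^n, F_q^n. For m₁ ∈ F_q^{l₁}, m₂ ∈ F_q^{l₂} and m̂ = (m̂₁,m̂₂) ∈ F_q^{l₁}×F_q^{l₂}, define V₁^n(m₁) = [m₁ 0^{l₂}]·G_{O/I} ⊕ B₁^n, V₂^n(m₂) = [0^{l₁} m₂]·G_{O/I} ⊕ B₂^n, and V^n(m̂) = [m̂₁ m̂₂]·G_{O/I} ⊕ B₁^n ⊕ B₂^n. If (m₁,m₂) ≠ (m̂₁,m̂₂), then for every triple ν₁^n, ν₂^n, ν̂^n ∈ F_q^n: P(V₁^n(m₁) = ν₁^n, V₂^n(m₂) = ν₂^n, V^n(m̂) = ν̂^n) = P(V₁^n(m₁) = ν₁^n, V₂^n(m₂) = ν₂^n) · P(V^n(m̂) = ν̂^n), and this common value is q^{−3n}. -/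

import Mathlib

open scoped BigOperators Classical

noncomputable section

namespace Stmt15

/-- Sample space: `(G_{O/I}, B₁^n, B₂^n)` uniformly distributed on this product space
(equivalently, mutually independent and uniform). -/
abbrev Ω (F : Type) (l n : ℕ) : Type :=
  (Fin l → Fin n → F) × (Fin n → F) × (Fin n → F)

/-- `V₁^n(m₁) = [m₁ 0^{l₂}]·G_{O/I} ⊕ B₁^n`. -/
def V1 {F : Type} [Field F] {l1 l2 n : ℕ} (ω : Ω F (l1 + l2) n)
    (m1 : Fin l1 → F) : Fin n → F :=
  fun t => (∑ j, Fin.append m1 (0 : Fin l2 → F) j * ω.1 j t) + ω.2.1 t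

/-- `V₂^n(m₂) = [0^{l₁} m₂]·G_{O/I} ⊕ B₂^n`. -/
def V2 {F : Type} [Field F] {l1 l2 n : ℕ} (ω : Ω F (l1 + l2) n)
    (m2 : Fin l2 → F) : Fin n → F :=
  fun t => (∑ j, Fin.append (0 : Fin l1 → F) m2 j * ω.1 j t) + ω.2.2 t

/-- `V^n(m̂) = [m̂₁ m̂₂]·G_{O/I} ⊕ B₁^n ⊕ B₂^n`. -/
def Vhat {F : Type} [Field F] {l1 l2 n : ℕ} (ω : Ω F (l1 + l2) n)
    (mhat : (Fin l1 → F) × (Fin l2 → F)) : Fin n → F :=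
  fun t => (∑ j, Fin.append mhat.1 mhat.2 j * ω.1 j t) + ω.2.1 t + ω.2.2 t

/-- Probability of an event under the uniform distribution on `Ω F l n`. -/
def pr {F : Type} [Fintype F] {l n : ℕ} (E : Ω F l n → Prop) : ℝ :=
  (Nat.card {ω : Ω F l n // E ω} : ℝ) / (Nat.card (Ω F l n) : ℝ)

/-- Fibers of a surjective additive hom all have cardinality `card A / card B`. -/
lemma card_fiber_mul {A B : Type} [AddGroup A] [AddGroup B]
    (f : A →+ B) (hf : Function.Surjective f) (y : B) :
    Nat.card {x : A // f x = y} * Nat.card B = Nat.card A := by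
  obtain ⟨x0, hx0⟩ := hf y
  have e : {x : A // f x = y} ≃ f.ker := by
    refine ⟨fun x => ⟨x.1 - x0, ?_⟩, fun k => ⟨k.1 + x0, ?_⟩, ?_, ?_⟩
    · simp [AddMonoidHom.mem_ker, map_sub, x.2, hx0]
    · have hk := k.2
      simp only [AddMonoidHom.mem_ker] at hk
      simp [map_add, hk, hx0]
    · intro x; ext; simp
    · intro k; ext; simp
  have h1 : Nat.card A = Nat.card (A ⧸ f.ker) * Nat.card f.ker :=
    AddSubgroup.card_eq_card_quotient_mul_card_addSubgroup f.ker
  have h2 : Nat.card (A ⧸ f.ker) = Nat.card B :=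
    Nat.card_congr (QuotientAddGroup.quotientKerEquivOfSurjective f hf).toEquiv
  rw [Nat.card_congr e, h1, h2, mul_comm]

lemma pr_congr {F : Type} [Fintype F] {l n : ℕ} {E E' : Ω F l n → Prop}
    (h : ∀ ω, E ω ↔ E' ω) : pr E = pr E' := by
  unfold pr
  rw [Nat.card_congr (Equiv.subtypeEquivRight h)]

lemma pr_fiber {F : Type} [Field F] [Fintype F] {l n : ℕ} {B : Type} [AddGroup B] [Fintype B]
    (f : Ω F l n →+ B) (hf : Function.Surjective f) (y : B) :
    pr (fun ω : Ω F l n => f ω = y) = 1 / (Nat.card B : ℝ) := by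
  have hΩ : (0:ℝ) < (Nat.card (Ω F l n) : ℝ) := by exact_mod_cast Nat.card_pos
  have hB : (0:ℝ) < (Nat.card B : ℝ) := by exact_mod_cast Nat.card_pos
  have key : (Nat.card {ω : Ω F l n // f ω = y} : ℝ) * (Nat.card B : ℝ)
      = (Nat.card (Ω F l n) : ℝ) := by exact_mod_cast card_fiber_mul f hf y
  unfold pr
  rw [div_eq_div_iff hΩ.ne' hB.ne', one_mul, key]

/-- Statistical independence of the coset leaders: if `(m₁,m₂) ≠ (m̂₁,m̂₂)` then the
triple event factors, and the joint probability is `q^{-3n}`. -/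
theorem coset_leaders_independent
    (F : Type) [Field F] [Fintype F] (l1 l2 n : ℕ)
    (m1 : Fin l1 → F) (m2 : Fin l2 → F) (mhat : (Fin l1 → F) × (Fin l2 → F))
    (hm : (m1, m2) ≠ mhat)
    (ν1 ν2 νhat : Fin n → F) :
    pr (fun ω : Ω F (l1 + l2) n =>
        V1 ω m1 = ν1 ∧ V2 ω m2 = ν2 ∧ Vhat ω mhat = νhat) =
      pr (fun ω : Ω F (l1 + l2) n => V1 ω m1 = ν1 ∧ V2 ω m2 = ν2) *
        pr (fun ω : Ω F (l1 + l2) n => Vhat ω mhat = νhat) ∧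
    pr (fun ω : Ω F (l1 + l2) n =>
        V1 ω m1 = ν1 ∧ V2 ω m2 = ν2 ∧ Vhat ω mhat = νhat) =
      1 / (Fintype.card F : ℝ) ^ (3 * n) := by
  set q : ℕ := Fintype.card F with hq
  -- the three additive homs
  have hadd1 : ∀ a b : Ω F (l1 + l2) n, V1 (a + b) m1 = V1 a m1 + V1 b m1 := by
    intro a b; funext t
    simp [V1, mul_add, Finset.sum_add_distrib]; ring
  have hadd2 : ∀ a b : Ω F (l1 + l2) n, V2 (a + b) m2 = V2 a m2 + V2 b m2 := by
    intro a b; funext t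
    simp [V2, mul_add, Finset.sum_add_distrib]; ring
  have hadd3 : ∀ a b : Ω F (l1 + l2) n, Vhat (a + b) mhat = Vhat a mhat + Vhat b mhat := by
    intro a b; funext t
    simp [Vhat, mul_add, Finset.sum_add_distrib]; ring
  set f12 : Ω F (l1 + l2) n →+ (Fin n → F) × (Fin n → F) :=
    AddMonoidHom.mk' (fun ω => (V1 ω m1, V2 ω m2))
      (fun a b => Prod.ext (hadd1 a b) (hadd2 a b)) with hf12
  set fh : Ω F (l1 + l2) n →+ (Fin n → F) :=
    AddMonoidHom.mk' (fun ω => Vhat ω mhat) hadd3 with hfh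
  set fall : Ω F (l1 + l2) n →+ (Fin n → F) × (Fin n → F) × (Fin n → F) :=
    AddMonoidHom.mk' (fun ω => (V1 ω m1, V2 ω m2, Vhat ω mhat))
      (fun a b => Prod.ext (hadd1 a b) (Prod.ext (hadd2 a b) (hadd3 a b))) with hfall
  -- surjectivity of f12
  have hs12 : Function.Surjective f12 := by
    rintro ⟨a, b⟩
    refine ⟨(0, a, b), ?_⟩
    refine Prod.ext ?_ ?_ <;> funext t <;> simp [hf12, V1, V2]
  -- surjectivity of fh
  have hsh : Function.Surjective fh := by
    intro c
    refine ⟨(0, c, 0), ?_⟩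
    funext t; simp [hfh, Vhat]
  -- nonzero difference coordinate
  have hne : Fin.append m1 m2 ≠ Fin.append mhat.1 mhat.2 := by
    intro h
    apply hm
    have h1 : m1 = mhat.1 := funext fun i => by
      have := congrFun h (Fin.castAdd l2 i); simpa [Fin.append_left] using this
    have h2 : m2 = mhat.2 := funext fun i => by
      have := congrFun h (Fin.natAdd l1 i); simpa [Fin.append_right] using this
    exact Prod.ext h1 h2
  obtain ⟨j0, hj0⟩ := Function.ne_iff.mp hne
  set d : Fin (l1 + l2) → F :=
    fun j => Fin.append mhat.1 mhat.2 j - Fin.append m1 m2 j with hd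
  have hd0 : d j0 ≠ 0 := sub_ne_zero.mpr (Ne.symm hj0)
  -- surjectivity of fall
  have hsall : Function.Surjective fall := by
    rintro ⟨a, b, c⟩
    set G : Fin (l1 + l2) → Fin n → F :=
      fun j t => if j = j0 then (c t - a t - b t) / d j0 else 0 with hG
    set B1 : Fin n → F := fun t => a t - ∑ j, Fin.append m1 (0 : Fin l2 → F) j * G j t with hB1
    set B2 : Fin n → F := fun t => b t - ∑ j, Fin.append (0 : Fin l1 → F) m2 j * G j t with hB2
    have hsplit : ∀ t, (∑ j, Fin.append m1 (0 : Fin l2 → F) j * G j t)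
        + ∑ j, Fin.append (0 : Fin l1 → F) m2 j * G j t
        = ∑ j, Fin.append m1 m2 j * G j t := by
      intro t
      rw [← Finset.sum_add_distrib]
      refine Finset.sum_congr rfl fun j _ => ?_
      rw [← add_mul]
      congr 1
      refine Fin.addCases (fun i => ?_) (fun i => ?_) j <;>
        simp [Fin.append_left, Fin.append_right]
    have hdsum : ∀ t, (∑ j, Fin.append mhat.1 mhat.2 j * G j t)
        - ∑ j, Fin.append m1 m2 j * G j t = c t - a t - b t := by
      intro t
      rw [← Finset.sum_sub_distrib]
      have hterm : ∀ j ∈ Finset.univ,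
          Fin.append mhat.1 mhat.2 j * G j t - Fin.append m1 m2 j * G j t
            = if j = j0 then c t - a t - b t else 0 := by
        intro j _
        by_cases h : j = j0
        · subst h
          simp only [hG, if_pos rfl, ← sub_mul]
          rw [show Fin.append mhat.1 mhat.2 j - Fin.append m1 m2 j = d j from rfl]
          field_simp
          simp
        · simp [hG, if_neg h]
      rw [Finset.sum_congr rfl hterm, Finset.sum_ite_eq' Finset.univ j0 fun _ => c t - a t - b t]
      simp
    refine ⟨(G, B1, B2), ?_⟩
    refine Prod.ext ?_ (Prod.ext ?_ ?_) <;> funext t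
    · simp [hfall, V1, hB1]
    · simp [hfall, V2, hB2]
    · show Vhat (G, B1, B2) mhat t = c t
      simp only [Vhat, hB1, hB2]
      linear_combination hdsum t - hsplit t
  -- probabilities
  have e12 : pr (fun ω : Ω F (l1 + l2) n => V1 ω m1 = ν1 ∧ V2 ω m2 = ν2)
      = 1 / (q : ℝ) ^ (2 * n) := by
    rw [pr_congr (E' := fun ω => f12 ω = (ν1, ν2)) (fun ω => by
      simp [hf12, Prod.ext_iff])]
    rw [pr_fiber f12 hs12]
    congr 1
    rw [Nat.card_eq_fintype_card]
    simp [Fintype.card_fun, two_mul, pow_add]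
    rfl
  have eh : pr (fun ω : Ω F (l1 + l2) n => Vhat ω mhat = νhat) = 1 / (q : ℝ) ^ n := by
    rw [pr_congr (E' := fun ω => fh ω = νhat) (fun ω => by simp [hfh])]
    rw [pr_fiber fh hsh]
    congr 1
    rw [Nat.card_eq_fintype_card]
    simp [Fintype.card_fun]
    rfl
  have eall : pr (fun ω : Ω F (l1 + l2) n =>
      V1 ω m1 = ν1 ∧ V2 ω m2 = ν2 ∧ Vhat ω mhat = νhat) = 1 / (q : ℝ) ^ (3 * n) := by
    rw [pr_congr (E' := fun ω => fall ω = (ν1, ν2, νhat)) (fun ω => by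
      simp [hfall, Prod.ext_iff])]
    rw [pr_fiber fall hsall]
    congr 1
    rw [Nat.card_eq_fintype_card]
    simp [Fintype.card_fun, show 3 * n = n + (n + n) by ring, pow_add]
    rfl
  have hqpos : (0:ℝ) < (q : ℝ) := by exact_mod_cast Fintype.card_pos
  refine ⟨?_, eall⟩
  rw [eall, e12, eh, div_mul_div_comm, one_mul, ← pow_add]
  congr 2
  ring
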